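/- arXiv:0907.2335 — 2 statements merged into one kernel-verified Lean document; each statement's English description precedes it below -/
import Mathlib

section
/- For any α ≠ 0 in a field K of characteristic zero, the Riordan matrix T(1 | αx - 1), i.e., the lower triangular matrix D = (d_{n,k}) with generating function column k equal to x^k/(αx-1)^{k+1}, is an involution: D² = I. -/
open PowerSeries

lemma key_inv {K : Type*} [Field K] (α : K) (k : ℕ) :
    (((C α * X - 1) ^ (k + 1))⁻¹ : K⟦X⟧) =
      (-1) ^ (k + 1) * rescale α (invOneSubPow K (k + 1)).val := by
  rw [PowerSeries.inv_eq_iff_mul_eq_one]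
  · have h1 : (C α * X - 1 : K⟦X⟧) = -(rescale α (1 - X)) := by
      rw [map_sub, map_one, rescale_X]; ring
    rw [h1, show (-(rescale α (1 - X) : K⟦X⟧)) ^ (k + 1)
        = (-1) ^ (k + 1) * rescale α ((1 - X) ^ (k + 1)) from by rw [neg_pow, map_pow]]
    have h2 : ((-1 : K⟦X⟧) ^ (k + 1)) * ((-1) ^ (k + 1)) = 1 := by
      rw [← pow_add]
      exact Even.neg_one_pow ⟨k + 1, by ring⟩
    calc (-1 : K⟦X⟧) ^ (k + 1) * rescale α (invOneSubPow K (k + 1)).val *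
          ((-1) ^ (k + 1) * rescale α ((1 - X) ^ (k + 1)))
        = ((-1 : K⟦X⟧) ^ (k + 1) * (-1) ^ (k + 1)) *
            rescale α ((invOneSubPow K (k + 1)).val * (1 - X) ^ (k + 1)) := by
          rw [map_mul]; ring
      _ = 1 := by
          rw [h2, ← invOneSubPow_inv_eq_one_sub_pow, (invOneSubPow K (k + 1)).val_inv]
          simp
  · simp only [map_pow, map_sub, map_mul, constantCoeff_C, constantCoeff_X, mul_zero,
      map_one, zero_sub]
    exact pow_ne_zero _ (by norm_num)

/-- `psComp f g` is the formal composition `f ∘ g`, i.e. the substitution of `g` into `f`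
(meaningful when `g` has zero constant term). -/
noncomputable def psComp {K : Type*} [Field K] (f g : K⟦X⟧) : K⟦X⟧ :=
  PowerSeries.mk fun m => ∑ n ∈ Finset.range (m + 1), coeff n f * coeff m (g ^ n)


/-- Entry `(n,k)` of the Riordan matrix `T(f∣g)`: the `k`-th column has generating
function `f·x^k/g^(k+1)` (Luzón–Morón notation). -/
noncomputable def riordanEntry {K : Type*} [Field K] (f g : K⟦X⟧) (n k : ℕ) : K :=
  coeff n (f * X ^ k * (g ^ (k + 1))⁻¹)

/-- Product of infinite lower triangular matrices. -/
noncomputable def matMul {K : Type*} [Field K] (A B : ℕ → ℕ → K) (n k : ℕ) : K :=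
  ∑ j ∈ Finset.range (n + 1), A n j * B j k


lemma entry_eq {K : Type*} [Field K] (α : K) (n k : ℕ) :
    riordanEntry 1 (C α * X - 1) n k =
      (-1 : K) ^ (k + 1) * α ^ (n - k) * (n.choose k : K) := by
  rw [riordanEntry, one_mul, key_inv, invOneSubPow_val_succ_eq_mk_add_choose, mul_left_comm,
    show ((-1 : K⟦X⟧) ^ (k + 1)) = C ((-1 : K) ^ (k + 1)) by simp [map_pow],
    coeff_C_mul, coeff_X_pow_mul']
  split_ifs with h
  · rw [coeff_rescale, coeff_mk, Nat.add_sub_cancel' h]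
    ring
  · rw [Nat.choose_eq_zero_of_lt (not_le.mp h)]
    push_cast
    ring

lemma alt_sum {K : Type*} [Field K] [CharZero K] {m : ℕ} (hm : m ≠ 0) :
    ∑ i ∈ Finset.range (m + 1), (-1 : K) ^ i * (m.choose i : K) = 0 := by
  have h := Int.alternating_sum_range_choose_of_ne hm
  have : ((∑ i ∈ Finset.range (m + 1), (-1 : ℤ) ^ i * (m.choose i : ℤ) : ℤ) : K) = 0 := by
    rw [h]; norm_num
  rw [← this]
  push_cast
  ring

theorem stmt6' {K : Type*} [Field K] [CharZero K] (α : K) (hα : α ≠ 0) :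
    ∀ n k : ℕ,
      matMul (riordanEntry 1 (C α * X - 1)) (riordanEntry 1 (C α * X - 1)) n k =
        if n = k then 1 else 0 := by
  intro n k
  unfold matMul
  simp only [entry_eq]
  rcases lt_trichotomy n k with h | h | h
  · rw [if_neg h.ne]
    refine Finset.sum_eq_zero fun j hj => ?_
    rw [Nat.choose_eq_zero_of_lt ((Nat.lt_succ_iff.mp (Finset.mem_range.mp hj)).trans_lt h)]
    push_cast; ring
  · subst h
    rw [if_pos rfl, Finset.sum_eq_single_of_mem n (Finset.self_mem_range_succ n)
      (fun j hj hne => by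
        rw [Nat.choose_eq_zero_of_lt
          (lt_of_le_of_ne (Nat.lt_succ_iff.mp (Finset.mem_range.mp hj)) hne)]
        push_cast; ring)]
    simp only [Nat.sub_self, pow_zero, Nat.choose_self, Nat.cast_one, mul_one]
    rw [← pow_add]
    exact Even.neg_one_pow ⟨n + 1, by ring⟩
  · rw [if_neg (by omega)]
    rw [← Finset.sum_subset (show Finset.Ico k (n + 1) ⊆ Finset.range (n + 1) by
        rw [Finset.range_eq_Ico]; exact Finset.Ico_subset_Ico (Nat.zero_le _) le_rfl)
      (fun j hj hj' => by
        have : j < k := by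
          simp only [Finset.mem_Ico, Finset.mem_range] at hj hj'; omega
        rw [Nat.choose_eq_zero_of_lt this]; push_cast; ring)]
    rw [Finset.sum_Ico_eq_sum_range, show n + 1 - k = (n - k) + 1 by omega]
    have key : ∀ i ∈ Finset.range ((n - k) + 1),
        (-1 : K) ^ (k + i + 1) * α ^ (n - (k + i)) * (n.choose (k + i) : K) *
          ((-1 : K) ^ (k + 1) * α ^ (k + i - k) * ((k + i).choose k : K)) =
        α ^ (n - k) * (n.choose k : K) * ((-1 : K) ^ i * ((n - k).choose i : K)) := by
      intro i hi
      have hi' : i ≤ n - k := Nat.lt_succ_iff.mp (Finset.mem_range.mp hi)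
      have hc : (n.choose (k + i)) * ((k + i).choose k) =
          n.choose k * ((n - k).choose (k + i - k)) :=
        Nat.choose_mul (Nat.le_add_right _ _)
      have hs : (-1 : K) ^ (k + i + 1) * (-1 : K) ^ (k + 1) = (-1 : K) ^ i := by
        rw [← pow_add, show (k + i + 1) + (k + 1) = i + 2 * (k + 1) by ring,
          pow_add, pow_mul]
        norm_num
      have ha : α ^ (n - (k + i)) * α ^ (k + i - k) = α ^ (n - k) := by
        rw [← pow_add, show (n - (k + i)) + (k + i - k) = n - k by omega]
      calc (-1 : K) ^ (k + i + 1) * α ^ (n - (k + i)) * (n.choose (k + i) : K) *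
            ((-1 : K) ^ (k + 1) * α ^ (k + i - k) * ((k + i).choose k : K))
          = ((-1 : K) ^ (k + i + 1) * (-1 : K) ^ (k + 1)) *
              (α ^ (n - (k + i)) * α ^ (k + i - k)) *
              ((n.choose (k + i) * (k + i).choose k : ℕ) : K) := by push_cast; ring
        _ = α ^ (n - k) * (n.choose k : K) * ((-1 : K) ^ i * ((n - k).choose i : K)) := by
            rw [hs, ha, hc, show k + i - k = i by omega]; push_cast; ring
    rw [Finset.sum_congr rfl key, ← Finset.mul_sum, alt_sum (show n - k ≠ 0 by omega),
      mul_zero]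

/-- For α ≠ 0, the Riordan matrix T(1 ∣ αx - 1) is an involution: D² = I. -/
theorem stmt6 {K : Type*} [Field K] [CharZero K] (α : K) (hα : α ≠ 0) :
    ∀ n k : ℕ,
      matMul (riordanEntry 1 (C α * X - 1)) (riordanEntry 1 (C α * X - 1)) n k =
        if n = k then 1 else 0 := stmt6' α hα
end

section
/- Let s(x) be a formal power series over a field of characteristic zero with s(0) = 0 and nonzero linear coefficient, and let t be its compositional inverse. If t(-s(x)) = -x, then s is odd (s(-x) = -s(x)). -/
open PowerSeries

lemma psComp_rescale {K : Type*} [Field K] (c : K) (f g : K⟦X⟧) :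
    rescale c (psComp f g) = psComp f (rescale c g) := by
  ext m
  simp only [psComp, coeff_rescale, coeff_mk, ← map_pow, Finset.mul_sum]
  refine Finset.sum_congr rfl fun n _ => ?_
  ring

lemma psComp_inj {K : Type*} [Field K] (t : K⟦X⟧) (ht1 : coeff 1 t ≠ 0)
    (a b : K⟦X⟧) (ha : constantCoeff a = 0) (hb : constantCoeff b = 0)
    (hab : psComp t a = psComp t b) : a = b := by
  ext m
  induction m using Nat.strong_induction_on with
  | _ m IH =>
    match m with
    | 0 => rw [coeff_zero_eq_constantCoeff, ha, hb]
    | m + 1 =>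
      have hA : ∀ n, ∀ j, j < m + 1 → coeff j (a ^ n) = coeff j (b ^ n) := by
        intro n
        induction n with
        | zero => intro j _; rfl
        | succ n ihn =>
          intro j hj
          rw [pow_succ, pow_succ, coeff_mul, coeff_mul]
          refine Finset.sum_congr rfl fun p hp => ?_
          rw [Finset.HasAntidiagonal.mem_antidiagonal] at hp
          rw [ihn p.1 (lt_of_le_of_lt (Nat.le.intro hp) hj),
            IH p.2 (lt_of_le_of_lt (Nat.le.intro (by omega : p.2 + p.1 = j)) hj)]
      have hB : ∀ n, 2 ≤ n → coeff (m + 1) (a ^ n) = coeff (m + 1) (b ^ n) := by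
        intro n hn
        obtain ⟨k, rfl⟩ : ∃ k, n = k + 2 := ⟨n - 2, by omega⟩
        rw [pow_succ a (k + 1), pow_succ b (k + 1), coeff_mul, coeff_mul]
        refine Finset.sum_congr rfl fun p hp => ?_
        rw [Finset.HasAntidiagonal.mem_antidiagonal] at hp
        rcases Nat.eq_zero_or_pos p.2 with h2 | h2
        · rw [h2, coeff_zero_eq_constantCoeff, ha, hb, mul_zero, mul_zero]
        rcases Nat.eq_zero_or_pos p.1 with h1 | h1
        · rw [h1, coeff_zero_eq_constantCoeff, map_pow, map_pow, ha, hb]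
          simp
        have hp1 : p.1 < m + 1 := by omega
        have hp2 : p.2 < m + 1 := by omega
        rw [hA (k + 1) p.1 hp1, IH p.2 hp2]
      have hsum : ∑ n ∈ Finset.range (m + 2),
          coeff n t * (coeff (m + 1) (a ^ n) - coeff (m + 1) (b ^ n)) = 0 := by
        have h2 := congrArg (coeff (m + 1)) hab
        simp only [psComp, coeff_mk] at h2
        simp [mul_sub, Finset.sum_sub_distrib, h2]
      rw [Finset.sum_eq_single 1] at hsum
      · rcases mul_eq_zero.mp hsum with h' | h'
        · exact absurd h' ht1
        · rw [pow_one, pow_one] at h'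
          exact sub_eq_zero.mp h'
      · intro n _ hn1
        match n, hn1 with
        | 0, _ => simp
        | n + 2, _ => rw [hB (n + 2) (by omega)]; ring
      · intro habs
        exact absurd (Finset.mem_range.mpr (by omega)) habs

/-- If t is the compositional inverse of s and t(-s(x)) = -x, then s is odd. -/
theorem stmt12 {K : Type*} [Field K] [CharZero K] (s t : K⟦X⟧)
    (h0 : constantCoeff s = 0) (h1 : coeff 1 s ≠ 0)
    (ht0 : constantCoeff t = 0)
    (hst : psComp s t = X) (hts : psComp t s = X)
    (h : psComp t (-s) = -X) :
    rescale (-1) s = -s := by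
  have ht1 : coeff 1 t ≠ 0 := by
    have hc := congrArg (coeff 1) hst
    simp only [psComp, coeff_mk, coeff_X, if_pos rfl] at hc
    intro h0t
    rw [Finset.sum_range_succ, Finset.sum_range_one] at hc
    simp [h0t] at hc
  have hkey : psComp t (rescale (-1) s) = psComp t (-s) := by
    rw [← psComp_rescale, hts, h]
    ext n
    rw [coeff_rescale, map_neg, coeff_X]
    split_ifs with hn
    · subst hn; simp [coeff_X]
    · simp [coeff_X, hn]
  have h0r : constantCoeff (rescale (-1) s) = 0 := by
    rw [← coeff_zero_eq_constantCoeff, coeff_rescale]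
    simp [coeff_zero_eq_constantCoeff, h0]
  have h0n : constantCoeff (-s) = 0 := by simp [h0]
  exact psComp_inj t ht1 _ _ h0r h0n hkey
end
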